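/- Under the stated orthogonality, projection and regularity hypotheses, the quadratic moment function g admits the U-statistic first-step influence function φ(w_i,w_j) = α₀(x_i,x_j)(c₁y_i + c₂y_j − c₁γ₀(x_i) − c₂γ₀(x_j)): namely, (a) the right derivative at τ = 0 of τ ↦ E_{F₀⊗F₀}[g(W_i,W_j,γ_τ,θ)] equals ∫∫ φ(w_i,w_j) K_H(dw_i,dw_j), and (b) E_{F_τ⊗F_τ}[α₀(X_i,X_j)(c₁(Y_i − γ_τ(X_i)) + c₂(Y_j − γ_τ(X_j)))] = 0 for every τ ∈ [0,τ̄). -/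

import Mathlib

/-!
STATEMENT 1 (Lemma 1 of the paper): Under orthogonality, projection and regularity
hypotheses, g admits the U-statistic first-step influence function
φ(w_i,w_j) = α₀(x_i,x_j)(c₁y_i + c₂y_j − c₁γ₀(x_i) − c₂γ₀(x_j)):
(a) the right derivative at τ = 0 of τ ↦ E_{F₀⊗F₀}[g(W_i,W_j,γ_τ,θ)] equals
    ∫∫ φ dK_H with K_H = F₀⊗H + H⊗F₀;
(b) E_{F_τ⊗F_τ}[α₀(X_i,X_j)(c₁(Y_i − γ_τ(X_i)) + c₂(Y_j − γ_τ(X_j)))] = 0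
    for every τ ∈ [0,τ̄).
𝒲 = ℝ × 𝒳, F_τ = F₀ + τ(H−F₀) (τ̄ ≤ 1 so that F_τ is a probability measure);
μ₀, μ_H are the X-marginals of F₀, H; orthogonal projections are rendered by their
characterizing property; γ₀ = γ_0 (the path at τ = 0).
-/

open MeasureTheory Filter

section Aux
variable {α β : Type*} [MeasurableSpace α] [MeasurableSpace β]

lemma aux_l2_mul_integrable {μ : Measure α} {f g : α → ℝ}
    (hf : MemLp f 2 μ) (hg : MemLp g 2 μ) :
    Integrable (fun x => f x * g x) μ := by
  refine ((hf.integrable_sq.add hg.integrable_sq).const_mul (1/2)).mono'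
    (hf.aestronglyMeasurable.mul hg.aestronglyMeasurable)
    (Filter.Eventually.of_forall fun x => ?_)
  have h1 : |f x * g x| ≤ 1/2 * (f x ^ 2 + g x ^ 2) := by
    rw [abs_mul]
    nlinarith [sq_nonneg (|f x| - |g x|), sq_abs (f x), sq_abs (g x),
      abs_nonneg (f x), abs_nonneg (g x)]
  calc ‖f x * g x‖ = |f x * g x| := rfl
    _ ≤ 1/2 * (f x ^ 2 + g x ^ 2) := h1

lemma aux_int_of_bdd {μ : Measure α} [IsFiniteMeasure μ] {f : α → ℝ}
    (hm : AEStronglyMeasurable f μ) {C : ℝ} (hb : ∀ x, |f x| ≤ C) : Integrable f μ :=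
  (integrable_const C).mono' hm (Filter.Eventually.of_forall fun x => by
    simpa [Real.norm_eq_abs] using hb x)

lemma aux_int_comp_snd {𝒳 : Type*} [MeasurableSpace 𝒳] {F : Measure (ℝ × 𝒳)}
    {f : 𝒳 → ℝ} (hf : Integrable f (F.map Prod.snd)) :
    Integrable (fun w : ℝ × 𝒳 => f w.2) F :=
  hf.comp_measurable measurable_snd

lemma aux_int_comp_fst' {E : Type*} [NormedAddCommGroup E]
    {μ : Measure α} {ν : Measure β} [SFinite μ] [IsProbabilityMeasure ν]
    {f : α → E} (hf : Integrable f μ) :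
    Integrable (fun p : α × β => f p.1) (μ.prod ν) := by
  have h : (μ.prod ν).map Prod.fst = μ := by simp
  exact (Integrable.comp_measurable (h ▸ hf) measurable_fst : _)

lemma aux_int_comp_snd' {E : Type*} [NormedAddCommGroup E]
    {μ : Measure α} {ν : Measure β} [IsProbabilityMeasure μ] [SFinite ν]
    {f : β → E} (hf : Integrable f ν) :
    Integrable (fun p : α × β => f p.2) (μ.prod ν) := by
  have h : (μ.prod ν).map Prod.snd = ν := by simp
  exact (Integrable.comp_measurable (h ▸ hf) measurable_snd : _)

lemma aux_memℒp_comp_fst {μ : Measure α} {ν : Measure β} [SFinite μ] [IsProbabilityMeasure ν]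
    {f : α → ℝ} (hf : MemLp f 2 μ) :
    MemLp (fun p : α × β => f p.1) 2 (μ.prod ν) := by
  have h : (μ.prod ν).map Prod.fst = μ := by simp
  exact ((memLp_map_measure_iff (h ▸ hf.aestronglyMeasurable)
    measurable_fst.aemeasurable).mp (h ▸ hf) : _)

lemma aux_memℒp_comp_snd {μ : Measure α} {ν : Measure β} [IsProbabilityMeasure μ] [SFinite ν]
    {f : β → ℝ} (hf : MemLp f 2 ν) :
    MemLp (fun p : α × β => f p.2) 2 (μ.prod ν) := by
  have h : (μ.prod ν).map Prod.snd = ν := by simp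
  exact ((memLp_map_measure_iff (h ▸ hf.aestronglyMeasurable)
    measurable_snd.aemeasurable).mp (h ▸ hf) : _)

lemma aux_ratio_tendsto {f : ℝ → ℝ} {L C' : ℝ} (hC' : 0 ≤ C')
    (h : ∀ ε > (0:ℝ), ∃ δ' > (0:ℝ), ∀ τ : ℝ, 0 < τ → τ < δ' → |f τ - τ * L| ≤ C' * ε * τ) :
    Tendsto (fun τ => f τ / τ) (nhdsWithin 0 (Set.Ioi 0)) (nhds L) := by
  rw [Metric.tendsto_nhdsWithin_nhds]
  intro ε hε
  have hε0 : 0 < ε / (2 * (C' + 1)) := by positivity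
  obtain ⟨δ', hδ'pos, hb⟩ := h _ hε0
  refine ⟨δ', hδ'pos, fun {τ} hτ hd => ?_⟩
  have hτ0 : 0 < τ := hτ
  have hτδ : τ < δ' := by
    rw [Real.dist_eq, sub_zero, abs_of_pos hτ0] at hd; exact hd
  have hest := hb τ hτ0 hτδ
  rw [Real.dist_eq]
  have heq : f τ / τ - L = (f τ - τ * L) / τ := by field_simp
  rw [heq, abs_div, abs_of_pos hτ0, div_lt_iff₀ hτ0]
  calc |f τ - τ * L| ≤ C' * (ε / (2 * (C' + 1))) * τ := hest
    _ < ε * τ := by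
        have h1 : C' * (ε / (2 * (C' + 1))) < ε := by
          rw [div_eq_mul_inv, ← mul_assoc]
          have h2 : C' * ε < ε * (2 * (C' + 1)) := by nlinarith
          calc C' * ε * (2 * (C' + 1))⁻¹ < ε * (2 * (C' + 1)) * (2 * (C' + 1))⁻¹ := by
                apply mul_lt_mul_of_pos_right h2; positivity
            _ = ε := by field_simp
        exact mul_lt_mul_of_pos_right h1 hτ0

end Aux

theorem UFSIF_for_orthogonal_first_steps
    {𝒳 : Type*} [MeasurableSpace 𝒳]
    (F₀ H : Measure (ℝ × 𝒳)) [IsProbabilityMeasure F₀] [IsProbabilityMeasure H]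
    (μ₀ μH : Measure 𝒳)
    (hμ₀ : μ₀ = F₀.map Prod.snd) (hμH : μH = H.map Prod.snd)
    (τbar : ℝ) (hτbar : 0 < τbar) (hτbar1 : τbar ≤ 1)
    (Fτ : ℝ → Measure (ℝ × 𝒳))
    (hFτ : ∀ τ, Fτ τ = ENNReal.ofReal (1 - τ) • F₀ + ENNReal.ofReal τ • H)
    -- Γ: closed linear subspace of L²(μ₀) containing constants, square-integrable
    -- under the X-marginal of H (closedness is not needed once projections are
    -- characterized by orthogonality, so it is not assumed)
    (Γ : Set (𝒳 → ℝ))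
    (hΓ_const : ∀ c : ℝ, (fun _ => c) ∈ Γ)
    (hΓ_add : ∀ f ∈ Γ, ∀ g' ∈ Γ, (fun x => f x + g' x) ∈ Γ)
    (hΓ_smul : ∀ (c : ℝ), ∀ f ∈ Γ, (fun x => c * f x) ∈ Γ)
    (hΓ_meas : ∀ f ∈ Γ, Measurable f)
    (hΓ_L2 : ∀ f ∈ Γ, MemLp f 2 μ₀)
    (hΓ_L2H : ∀ f ∈ Γ, MemLp f 2 μH)
    -- the first-step path: γ_τ ∈ Γ solves the orthogonality condition under F_τ
    (γpath : ℝ → 𝒳 → ℝ)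
    (hγΓ : ∀ τ ∈ Set.Ico 0 τbar, γpath τ ∈ Γ)
    (horth : ∀ τ ∈ Set.Ico 0 τbar, ∀ ν ∈ Γ,
      (∫ w : ℝ × 𝒳, ν w.2 * (w.1 - γpath τ w.2) ∂(Fτ τ)) = 0)
    -- S ⊇ Γ + Γ and α₀ = Π_S δ, bounded, with both sections in Γ
    (S : Set (𝒳 × 𝒳 → ℝ))
    (hS_sub : ∀ ν ∈ Γ, ∀ w ∈ Γ, (fun p : 𝒳 × 𝒳 => ν p.1 + w p.2) ∈ S)
    (hS_L2 : ∀ s ∈ S, MemLp s 2 (μ₀.prod μ₀))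
    (δ : 𝒳 → 𝒳 → ℝ)
    (hδ_meas : Measurable (Function.uncurry δ))
    (hδ_L2 : MemLp (fun p : 𝒳 × 𝒳 => δ p.1 p.2) 2 (μ₀.prod μ₀))
    (α₀ : 𝒳 → 𝒳 → ℝ)
    (hα₀_meas : Measurable (Function.uncurry α₀))
    (hα₀_mem : (fun p : 𝒳 × 𝒳 => α₀ p.1 p.2) ∈ S)
    (hα₀_proj : ∀ s ∈ S,
      (∫ p : 𝒳 × 𝒳, (δ p.1 p.2 - α₀ p.1 p.2) * s p ∂(μ₀.prod μ₀)) = 0)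
    (Cα : ℝ) (hα₀_bdd : ∀ x x', |α₀ x x'| ≤ Cα)
    (hα₀_sec₁ : ∀ x, (fun x' => α₀ x' x) ∈ Γ)
    (hα₀_sec₂ : ∀ x, (fun x' => α₀ x x') ∈ Γ)
    -- the identifying quadratic moment and the linearization hypothesis
    (g : (ℝ × 𝒳) → (ℝ × 𝒳) → (𝒳 → ℝ) → ℝ → ℝ)
    (θ c₁ c₂ : ℝ)
    (hlin : ∃ D : ℝ,
      HasDerivWithinAt
        (fun τ : ℝ => ∫ p : (ℝ × 𝒳) × (ℝ × 𝒳), g p.1 p.2 (γpath τ) θ ∂(F₀.prod F₀))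
        D (Set.Ici 0) 0
      ∧ HasDerivWithinAt
        (fun τ : ℝ => ∫ p : (ℝ × 𝒳) × (ℝ × 𝒳),
          δ p.1.2 p.2.2 * (c₁ * γpath τ p.1.2 + c₂ * γpath τ p.2.2) ∂(F₀.prod F₀))
        D (Set.Ici 0) 0)
    -- regularity: Y integrable under F₀ and H; the path has a bounded derivative γ̇
    (hYF₀ : Integrable (fun w : ℝ × 𝒳 => w.1) F₀)
    (hYH : Integrable (fun w : ℝ × 𝒳 => w.1) H)
    (γdot : 𝒳 → ℝ) (hγdot_meas : Measurable γdot)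
    (M : ℝ) (hγdot_bdd : ∀ x, |γdot x| ≤ M)
    (hpath : ∀ ε > (0:ℝ), ∃ δ' > (0:ℝ), ∀ τ : ℝ, 0 < τ → τ < δ' →
      ∀ x, |γpath τ x - γpath 0 x - τ * γdot x| ≤ ε * τ) :
    -- (a): the right derivative of the g-functional at τ = 0 equals ∫∫ φ dK_H
    HasDerivWithinAt
      (fun τ : ℝ => ∫ p : (ℝ × 𝒳) × (ℝ × 𝒳), g p.1 p.2 (γpath τ) θ ∂(F₀.prod F₀))
      (∫ p : (ℝ × 𝒳) × (ℝ × 𝒳),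
        α₀ p.1.2 p.2.2 *
          (c₁ * p.1.1 + c₂ * p.2.1 - c₁ * γpath 0 p.1.2 - c₂ * γpath 0 p.2.2)
        ∂(F₀.prod H + H.prod F₀))
      (Set.Ici 0) 0
    -- (b): the zero-mean property under F_τ ⊗ F_τ for every τ ∈ [0, τ̄)
    ∧ ∀ τ ∈ Set.Ico 0 τbar,
        (∫ p : (ℝ × 𝒳) × (ℝ × 𝒳),
          α₀ p.1.2 p.2.2 *
            (c₁ * (p.1.1 - γpath τ p.1.2) + c₂ * (p.2.1 - γpath τ p.2.2))
          ∂((Fτ τ).prod (Fτ τ))) = 0  := by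
  -- ===== basic facts =====
  have h0mem : (0:ℝ) ∈ Set.Ico 0 τbar := ⟨le_rfl, hτbar⟩
  have hne : Nonempty (ℝ × 𝒳) := by
    by_contra h
    rw [not_nonempty_iff] at h
    have h1 : F₀ Set.univ = 1 := measure_univ
    rw [Set.univ_eq_empty_iff.mpr h] at h1
    simp at h1
  obtain ⟨⟨y₀, x₀⟩⟩ := hne
  have hCα : 0 ≤ Cα := (abs_nonneg _).trans (hα₀_bdd x₀ x₀)
  have hM : 0 ≤ M := (abs_nonneg _).trans (hγdot_bdd x₀)
  haveI hPμ₀ : IsProbabilityMeasure μ₀ := by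
    rw [hμ₀]; exact Measure.isProbabilityMeasure_map measurable_snd.aemeasurable
  haveI hPμH : IsProbabilityMeasure μH := by
    rw [hμH]; exact Measure.isProbabilityMeasure_map measurable_snd.aemeasurable
  have hF0 : Fτ 0 = F₀ := by rw [hFτ]; simp
  have hγm : ∀ τ ∈ Set.Ico (0:ℝ) τbar, Measurable (γpath τ) :=
    fun τ hτ => hΓ_meas _ (hγΓ τ hτ)
  have hα2m : Measurable (fun p : (ℝ × 𝒳) × (ℝ × 𝒳) => α₀ p.1.2 p.2.2) :=
    hα₀_meas.comp ((measurable_fst.snd).prodMk (measurable_snd.snd))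
  have hαqm : Measurable (fun q : 𝒳 × 𝒳 => α₀ q.1 q.2) := hα₀_meas
  -- integrability of γpath τ composed with snd
  have hγcF₀ : ∀ τ ∈ Set.Ico (0:ℝ) τbar, Integrable (fun w : ℝ × 𝒳 => γpath τ w.2) F₀ :=
    fun τ hτ => aux_int_comp_snd (hμ₀ ▸ (hΓ_L2 _ (hγΓ τ hτ)).integrable one_le_two)
  have hγcH : ∀ τ ∈ Set.Ico (0:ℝ) τbar, Integrable (fun w : ℝ × 𝒳 => γpath τ w.2) H :=
    fun τ hτ => aux_int_comp_snd (hμH ▸ (hΓ_L2H _ (hγΓ τ hτ)).integrable one_le_two)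
  have hresF₀ : ∀ τ ∈ Set.Ico (0:ℝ) τbar,
      Integrable (fun w : ℝ × 𝒳 => w.1 - γpath τ w.2) F₀ :=
    fun τ hτ => hYF₀.sub (hγcF₀ τ hτ)
  have hresH : ∀ τ ∈ Set.Ico (0:ℝ) τbar,
      Integrable (fun w : ℝ × 𝒳 => w.1 - γpath τ w.2) H :=
    fun τ hτ => hYH.sub (hγcH τ hτ)
  have hPFτ : ∀ τ ∈ Set.Ico (0:ℝ) τbar, IsProbabilityMeasure (Fτ τ) := by
    intro τ hτ
    constructor
    rw [hFτ]
    simp only [Measure.coe_add, Pi.add_apply, Measure.coe_smul, Pi.smul_apply,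
      measure_univ, smul_eq_mul, mul_one]
    rw [← ENNReal.ofReal_add (by linarith [hτ.2, hτbar1] : (0:ℝ) ≤ 1 - τ) hτ.1]
    norm_num
  -- ===== part (b) =====
  have partb : ∀ τ ∈ Set.Ico (0:ℝ) τbar,
      (∫ p : (ℝ × 𝒳) × (ℝ × 𝒳),
        α₀ p.1.2 p.2.2 *
          (c₁ * (p.1.1 - γpath τ p.1.2) + c₂ * (p.2.1 - γpath τ p.2.2))
        ∂((Fτ τ).prod (Fτ τ))) = 0 := by
    intro τ hτ
    haveI := hPFτ τ hτ
    have hIτ : Integrable (fun w : ℝ × 𝒳 => w.1 - γpath τ w.2) (Fτ τ) := by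
      rw [hFτ]
      exact ((hresF₀ τ hτ).smul_measure ENNReal.ofReal_ne_top).add_measure
        ((hresH τ hτ).smul_measure ENNReal.ofReal_ne_top)
    have hint1 : Integrable (fun p : (ℝ × 𝒳) × (ℝ × 𝒳) =>
        α₀ p.1.2 p.2.2 * (c₁ * (p.1.1 - γpath τ p.1.2))) ((Fτ τ).prod (Fτ τ)) :=
      (aux_int_comp_fst' (hIτ.const_mul c₁)).bdd_mul hα2m.aestronglyMeasurable
        (Filter.Eventually.of_forall fun p => by simpa [Real.norm_eq_abs] using hα₀_bdd p.1.2 p.2.2)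
    have hint2 : Integrable (fun p : (ℝ × 𝒳) × (ℝ × 𝒳) =>
        α₀ p.1.2 p.2.2 * (c₂ * (p.2.1 - γpath τ p.2.2))) ((Fτ τ).prod (Fτ τ)) :=
      (aux_int_comp_snd' (hIτ.const_mul c₂)).bdd_mul hα2m.aestronglyMeasurable
        (Filter.Eventually.of_forall fun p => by simpa [Real.norm_eq_abs] using hα₀_bdd p.1.2 p.2.2)
    have hsplit : (∫ p : (ℝ × 𝒳) × (ℝ × 𝒳),
        α₀ p.1.2 p.2.2 *
          (c₁ * (p.1.1 - γpath τ p.1.2) + c₂ * (p.2.1 - γpath τ p.2.2))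
        ∂((Fτ τ).prod (Fτ τ)))
        = (∫ p : (ℝ × 𝒳) × (ℝ × 𝒳),
            α₀ p.1.2 p.2.2 * (c₁ * (p.1.1 - γpath τ p.1.2)) ∂((Fτ τ).prod (Fτ τ)))
          + ∫ p : (ℝ × 𝒳) × (ℝ × 𝒳),
            α₀ p.1.2 p.2.2 * (c₂ * (p.2.1 - γpath τ p.2.2)) ∂((Fτ τ).prod (Fτ τ)) := by
      rw [← integral_add hint1 hint2]
      exact integral_congr_ae (Filter.Eventually.of_forall fun p => by ring)
    have hz1 : (∫ p : (ℝ × 𝒳) × (ℝ × 𝒳),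
        α₀ p.1.2 p.2.2 * (c₁ * (p.1.1 - γpath τ p.1.2)) ∂((Fτ τ).prod (Fτ τ))) = 0 := by
      have hkey : ∀ b : ℝ × 𝒳,
          (∫ a : ℝ × 𝒳, α₀ a.2 b.2 * (c₁ * (a.1 - γpath τ a.2)) ∂(Fτ τ)) = 0 := by
        intro b
        have hν : (fun x => c₁ * α₀ x b.2) ∈ Γ := hΓ_smul c₁ _ (hα₀_sec₁ b.2)
        have h := horth τ hτ _ hν
        rw [← h]
        exact integral_congr_ae (Filter.Eventually.of_forall fun w => by ring)
      calc (∫ p : (ℝ × 𝒳) × (ℝ × 𝒳),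
            α₀ p.1.2 p.2.2 * (c₁ * (p.1.1 - γpath τ p.1.2)) ∂((Fτ τ).prod (Fτ τ)))
          = ∫ b : ℝ × 𝒳, ∫ a : ℝ × 𝒳,
              α₀ a.2 b.2 * (c₁ * (a.1 - γpath τ a.2)) ∂(Fτ τ) ∂(Fτ τ) :=
            integral_prod_symm _ hint1
        _ = 0 := by simp [hkey]
    have hz2 : (∫ p : (ℝ × 𝒳) × (ℝ × 𝒳),
        α₀ p.1.2 p.2.2 * (c₂ * (p.2.1 - γpath τ p.2.2)) ∂((Fτ τ).prod (Fτ τ))) = 0 := by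
      have hkey : ∀ a : ℝ × 𝒳,
          (∫ b : ℝ × 𝒳, α₀ a.2 b.2 * (c₂ * (b.1 - γpath τ b.2)) ∂(Fτ τ)) = 0 := by
        intro a
        have hν : (fun x => c₂ * α₀ a.2 x) ∈ Γ := hΓ_smul c₂ _ (hα₀_sec₂ a.2)
        have h := horth τ hτ _ hν
        rw [← h]
        exact integral_congr_ae (Filter.Eventually.of_forall fun w => by ring)
      calc (∫ p : (ℝ × 𝒳) × (ℝ × 𝒳),
            α₀ p.1.2 p.2.2 * (c₂ * (p.2.1 - γpath τ p.2.2)) ∂((Fτ τ).prod (Fτ τ)))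
          = ∫ a : ℝ × 𝒳, ∫ b : ℝ × 𝒳,
              α₀ a.2 b.2 * (c₂ * (b.1 - γpath τ b.2)) ∂(Fτ τ) ∂(Fτ τ) :=
            integral_prod _ hint2
        _ = 0 := by simp [hkey]
    rw [hsplit, hz1, hz2, add_zero]
  -- ===== the key identity (★): ∫ ν γ̇ dμ₀ = ∫ ν (y - γ₀) dH for bounded ν ∈ Γ =====
  have hstar : ∀ (C : ℝ) (ν : 𝒳 → ℝ), ν ∈ Γ → (∀ x, |ν x| ≤ C) →
      (∫ x, ν x * γdot x ∂μ₀) = ∫ w : ℝ × 𝒳, ν w.2 * (w.1 - γpath 0 w.2) ∂H := by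
    intro C ν hνΓ hνb
    have hνm : Measurable ν := hΓ_meas _ hνΓ
    have hC : 0 ≤ C := (abs_nonneg _).trans (hνb x₀)
    have hνbdd : ∃ C', ∀ w : ℝ × 𝒳, ‖ν w.2‖ ≤ C' :=
      ⟨C, fun w => by simpa [Real.norm_eq_abs] using hνb w.2⟩
    have hIres : ∀ τ ∈ Set.Ico (0:ℝ) τbar, ∀ (F : Measure (ℝ × 𝒳)),
        Integrable (fun w : ℝ × 𝒳 => w.1 - γpath τ w.2) F →
        Integrable (fun w : ℝ × 𝒳 => ν w.2 * (w.1 - γpath τ w.2)) F :=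
      fun τ _ F hF => hF.bdd_mul (hνm.comp measurable_snd).aestronglyMeasurable (Filter.Eventually.of_forall hνbdd.choose_spec)
    have hIdiff : ∀ τ ∈ Set.Ico (0:ℝ) τbar, ∀ (ρ : Measure 𝒳),
        Integrable (γpath τ) ρ → Integrable (γpath 0) ρ →
        Integrable (fun x => ν x * (γpath τ x - γpath 0 x)) ρ :=
      fun τ _ ρ h1 h2 => (h1.sub h2).bdd_mul hνm.aestronglyMeasurable
        (Filter.Eventually.of_forall fun x => by simpa [Real.norm_eq_abs] using hνb x)
    have hIνγdot : ∀ (ρ : Measure 𝒳) [IsFiniteMeasure ρ],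
        Integrable (fun x => ν x * γdot x) ρ := by
      intro ρ _
      exact aux_int_of_bdd (hνm.mul hγdot_meas).aestronglyMeasurable
        (C := C * M) (fun x => by
          rw [abs_mul]; exact mul_le_mul (hνb x) (hγdot_bdd x) (abs_nonneg _) hC)
    have hkey : ∀ τ ∈ Set.Ioo (0:ℝ) τbar,
        (1 - τ) * ((∫ x, ν x * (γpath τ x - γpath 0 x) ∂μ₀) / τ)
          + (∫ x, ν x * (γpath τ x - γpath 0 x) ∂μH)
        = ∫ w : ℝ × 𝒳, ν w.2 * (w.1 - γpath 0 w.2) ∂H := by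
      intro τ hτ
      have hτI : τ ∈ Set.Ico (0:ℝ) τbar := ⟨le_of_lt hτ.1, hτ.2⟩
      have e1 : (∫ w : ℝ × 𝒳, ν w.2 * (w.1 - γpath τ w.2) ∂(Fτ τ)) = 0 := horth τ hτI _ hνΓ
      have e0 : (∫ w : ℝ × 𝒳, ν w.2 * (w.1 - γpath 0 w.2) ∂F₀) = 0 := by
        have h := horth 0 h0mem _ hνΓ; rwa [hF0] at h
      have hIF : Integrable (fun w : ℝ × 𝒳 => ν w.2 * (w.1 - γpath τ w.2)) F₀ :=
        hIres τ hτI F₀ (hresF₀ τ hτI)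
      have hIH : Integrable (fun w : ℝ × 𝒳 => ν w.2 * (w.1 - γpath τ w.2)) H :=
        hIres τ hτI H (hresH τ hτI)
      have hsplit : (∫ w : ℝ × 𝒳, ν w.2 * (w.1 - γpath τ w.2) ∂(Fτ τ))
          = (1 - τ) * (∫ w : ℝ × 𝒳, ν w.2 * (w.1 - γpath τ w.2) ∂F₀)
            + τ * (∫ w : ℝ × 𝒳, ν w.2 * (w.1 - γpath τ w.2) ∂H) := by
        rw [hFτ, integral_add_measure (hIF.smul_measure ENNReal.ofReal_ne_top)
            (hIH.smul_measure ENNReal.ofReal_ne_top),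
          integral_smul_measure, integral_smul_measure,
          ENNReal.toReal_ofReal (by linarith [hτ.2, hτbar1] : (0:ℝ) ≤ 1 - τ),
          ENNReal.toReal_ofReal (le_of_lt hτ.1)]
        simp [smul_eq_mul]
      have hmap0 : (∫ w : ℝ × 𝒳, ν w.2 * (γpath τ w.2 - γpath 0 w.2) ∂F₀)
          = ∫ x, ν x * (γpath τ x - γpath 0 x) ∂μ₀ := by
        rw [hμ₀, integral_map (f := fun x => ν x * (γpath τ x - γpath 0 x)) measurable_snd.aemeasurable
          ((hνm.mul ((hγm τ hτI).sub (hγm 0 h0mem))).aestronglyMeasurable)]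
      have hmapH : (∫ w : ℝ × 𝒳, ν w.2 * (γpath τ w.2 - γpath 0 w.2) ∂H)
          = ∫ x, ν x * (γpath τ x - γpath 0 x) ∂μH := by
        rw [hμH, integral_map (f := fun x => ν x * (γpath τ x - γpath 0 x)) measurable_snd.aemeasurable
          ((hνm.mul ((hγm τ hτI).sub (hγm 0 h0mem))).aestronglyMeasurable)]
      have hdF : (∫ w : ℝ × 𝒳, ν w.2 * (w.1 - γpath τ w.2) ∂F₀)
          = - ∫ x, ν x * (γpath τ x - γpath 0 x) ∂μ₀ := by
        have hIdF₀ : Integrable (fun w : ℝ × 𝒳 => ν w.2 * (γpath τ w.2 - γpath 0 w.2)) F₀ :=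
          ((hγcF₀ τ hτI).sub (hγcF₀ 0 h0mem)).bdd_mul
            (hνm.comp measurable_snd).aestronglyMeasurable (Filter.Eventually.of_forall hνbdd.choose_spec)
        have h2 : (∫ w : ℝ × 𝒳, ν w.2 * (w.1 - γpath τ w.2) ∂F₀)
            = (∫ w : ℝ × 𝒳, ν w.2 * (w.1 - γpath 0 w.2) ∂F₀)
              - ∫ w : ℝ × 𝒳, ν w.2 * (γpath τ w.2 - γpath 0 w.2) ∂F₀ := by
          rw [← integral_sub (hIres 0 h0mem F₀ (hresF₀ 0 h0mem)) hIdF₀]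
          exact integral_congr_ae (Filter.Eventually.of_forall fun w => by ring)
        rw [h2, e0, hmap0]; ring
      have hdH : (∫ w : ℝ × 𝒳, ν w.2 * (w.1 - γpath τ w.2) ∂H)
          = (∫ w : ℝ × 𝒳, ν w.2 * (w.1 - γpath 0 w.2) ∂H)
            - ∫ x, ν x * (γpath τ x - γpath 0 x) ∂μH := by
        have hIdH : Integrable (fun w : ℝ × 𝒳 => ν w.2 * (γpath τ w.2 - γpath 0 w.2)) H :=
          ((hγcH τ hτI).sub (hγcH 0 h0mem)).bdd_mul
            (hνm.comp measurable_snd).aestronglyMeasurable (Filter.Eventually.of_forall hνbdd.choose_spec)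
        rw [← hmapH, ← integral_sub (hIres 0 h0mem H (hresH 0 h0mem)) hIdH]
        exact integral_congr_ae (Filter.Eventually.of_forall fun w => by ring)
      rw [e1, hdF, hdH] at hsplit
      have hτne : τ ≠ 0 := ne_of_gt hτ.1
      set A := ∫ x, ν x * (γpath τ x - γpath 0 x) ∂μ₀ with hA
      set B := ∫ x, ν x * (γpath τ x - γpath 0 x) ∂μH with hB
      set cH := ∫ w : ℝ × 𝒳, ν w.2 * (w.1 - γpath 0 w.2) ∂H with hcH
      have hlc : (1 - τ) * A = τ * (cH - B) := by linear_combination hsplit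
      calc (1 - τ) * (A / τ) + B = ((1 - τ) * A) / τ + B := by ring
        _ = (τ * (cH - B)) / τ + B := by rw [hlc]
        _ = (cH - B) + B := by rw [mul_div_cancel_left₀ _ hτne]
        _ = cH := by ring
    -- limits as τ ↓ 0
    have hden : ∀ (ρ : Measure 𝒳) [IsProbabilityMeasure ρ],
        (∀ τ ∈ Set.Ico (0:ℝ) τbar, Integrable (γpath τ) ρ) →
        Tendsto (fun τ => (∫ x, ν x * (γpath τ x - γpath 0 x) ∂ρ) / τ)
          (nhdsWithin 0 (Set.Ioi 0)) (nhds (∫ x, ν x * γdot x ∂ρ)) := by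
      intro ρ hPρ hγint
      apply aux_ratio_tendsto (C' := C) hC
      intro ε hε
      obtain ⟨δ', hδ'pos, hd⟩ := hpath ε hε
      refine ⟨min δ' τbar, lt_min hδ'pos hτbar, fun τ hτ0 hτlt => ?_⟩
      have hτδ : τ < δ' := lt_of_lt_of_le hτlt (min_le_left _ _)
      have hτI : τ ∈ Set.Ico (0:ℝ) τbar := ⟨le_of_lt hτ0, lt_of_lt_of_le hτlt (min_le_right _ _)⟩
      have hId : Integrable (fun x => ν x * (γpath τ x - γpath 0 x)) ρ :=
        hIdiff τ hτI ρ (hγint τ hτI) (hγint 0 h0mem)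
      have hIg : Integrable (fun x => τ * (ν x * γdot x)) ρ := (hIνγdot ρ).const_mul τ
      have heq : (∫ x, ν x * (γpath τ x - γpath 0 x) ∂ρ) - τ * (∫ x, ν x * γdot x ∂ρ)
          = ∫ x, ν x * (γpath τ x - γpath 0 x) - τ * (ν x * γdot x) ∂ρ := by
        rw [← integral_const_mul, ← integral_sub hId hIg]
      have hbound : ∀ x, ‖ν x * (γpath τ x - γpath 0 x) - τ * (ν x * γdot x)‖ ≤ C * (ε * τ) := by
        intro x
        have h1 := hd τ hτ0 hτδ x
        have h2 : ν x * (γpath τ x - γpath 0 x) - τ * (ν x * γdot x)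
            = ν x * (γpath τ x - γpath 0 x - τ * γdot x) := by ring
        rw [Real.norm_eq_abs, h2, abs_mul]
        exact mul_le_mul (hνb x) h1 (abs_nonneg _) hC
      calc |(∫ x, ν x * (γpath τ x - γpath 0 x) ∂ρ) - τ * (∫ x, ν x * γdot x ∂ρ)|
          = ‖∫ x, ν x * (γpath τ x - γpath 0 x) - τ * (ν x * γdot x) ∂ρ‖ := by
            rw [← Real.norm_eq_abs, heq]
        _ ≤ C * (ε * τ) * (ρ Set.univ).toReal :=
            norm_integral_le_of_norm_le_const (Filter.Eventually.of_forall hbound)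
        _ = C * ε * τ := by rw [measure_univ, ENNReal.toReal_one, mul_one]; ring
    have hlim0 := hden μ₀ (fun τ hτ => (hΓ_L2 _ (hγΓ τ hτ)).integrable one_le_two)
    have hlimH := hden μH (fun τ hτ => (hΓ_L2H _ (hγΓ τ hτ)).integrable one_le_two)
    have hτid : Tendsto (fun τ : ℝ => τ) (nhdsWithin 0 (Set.Ioi 0)) (nhds 0) :=
      tendsto_id.mono_left nhdsWithin_le_nhds
    have hBH0 : Tendsto (fun τ => ∫ x, ν x * (γpath τ x - γpath 0 x) ∂μH)
        (nhdsWithin 0 (Set.Ioi 0)) (nhds 0) := by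
      have h1 := hlimH.mul hτid
      rw [mul_zero] at h1
      refine Filter.Tendsto.congr' ?_ h1
      filter_upwards [self_mem_nhdsWithin] with τ hτ
      exact div_mul_cancel₀ _ (ne_of_gt hτ)
    have hconst : Tendsto (fun τ : ℝ => (1 - τ : ℝ)) (nhdsWithin 0 (Set.Ioi 0)) (nhds 1) := by
      have h1 : Tendsto (fun τ : ℝ => 1 - τ) (nhds 0) (nhds (1 - 0)) :=
        tendsto_const_nhds.sub tendsto_id
      simpa using h1.mono_left nhdsWithin_le_nhds
    have hAll : Tendsto (fun τ => (1 - τ) * ((∫ x, ν x * (γpath τ x - γpath 0 x) ∂μ₀) / τ)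
        + (∫ x, ν x * (γpath τ x - γpath 0 x) ∂μH)) (nhdsWithin 0 (Set.Ioi 0))
        (nhds (1 * (∫ x, ν x * γdot x ∂μ₀) + 0)) := (hconst.mul hlim0).add hBH0
    have hConstT : Tendsto (fun τ => (1 - τ) * ((∫ x, ν x * (γpath τ x - γpath 0 x) ∂μ₀) / τ)
        + (∫ x, ν x * (γpath τ x - γpath 0 x) ∂μH)) (nhdsWithin 0 (Set.Ioi 0))
        (nhds (∫ w : ℝ × 𝒳, ν w.2 * (w.1 - γpath 0 w.2) ∂H)) := by
      refine Filter.Tendsto.congr' ?_ tendsto_const_nhds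
      filter_upwards [Ioo_mem_nhdsGT_of_mem (Set.mem_Ico.mpr ⟨le_refl (0:ℝ), hτbar⟩)] with τ hτ
      exact (hkey τ hτ).symm
    have huniq := tendsto_nhds_unique hAll hConstT
    simpa using huniq
  -- ===== part (a) =====
  obtain ⟨D, hgD, hδD⟩ := hlin
  have hαbdd2 : ∃ C', ∀ p : (ℝ × 𝒳) × (ℝ × 𝒳), ‖α₀ p.1.2 p.2.2‖ ≤ C' :=
    ⟨Cα, fun p => by simpa [Real.norm_eq_abs] using hα₀_bdd p.1.2 p.2.2⟩
  have hαbddq : ∃ C', ∀ q : 𝒳 × 𝒳, ‖α₀ q.1 q.2‖ ≤ C' :=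
    ⟨Cα, fun q => by simpa [Real.norm_eq_abs] using hα₀_bdd q.1 q.2⟩
  -- D'' = ∫∫ α₀ (c₁ γ̇_i + c₂ γ̇_j) dμ₀⊗μ₀ and its integrability
  have hγdcomb_m : Measurable (fun q : 𝒳 × 𝒳 => α₀ q.1 q.2 * (c₁ * γdot q.1 + c₂ * γdot q.2)) :=
    hαqm.mul (((hγdot_meas.comp measurable_fst).const_mul c₁).add
      ((hγdot_meas.comp measurable_snd).const_mul c₂))
  have hγdcomb_bdd : ∀ q : 𝒳 × 𝒳,
      |α₀ q.1 q.2 * (c₁ * γdot q.1 + c₂ * γdot q.2)| ≤ Cα * (|c₁| * M + |c₂| * M) := by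
    intro q
    rw [abs_mul]
    refine mul_le_mul (hα₀_bdd _ _) ?_ (abs_nonneg _) hCα
    calc |c₁ * γdot q.1 + c₂ * γdot q.2| ≤ |c₁ * γdot q.1| + |c₂ * γdot q.2| := abs_add_le _ _
      _ ≤ |c₁| * M + |c₂| * M := by
          rw [abs_mul, abs_mul]
          exact add_le_add (mul_le_mul_of_nonneg_left (hγdot_bdd _) (abs_nonneg _))
            (mul_le_mul_of_nonneg_left (hγdot_bdd _) (abs_nonneg _))
  have hγdcomb : Integrable (fun q : 𝒳 × 𝒳 =>
      α₀ q.1 q.2 * (c₁ * γdot q.1 + c₂ * γdot q.2)) (μ₀.prod μ₀) :=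
    aux_int_of_bdd hγdcomb_m.aestronglyMeasurable hγdcomb_bdd
  -- conversion of the δ-functional to μ₀ ⊗ μ₀
  have hJconv : ∀ τ ∈ Set.Ico (0:ℝ) τbar,
      (∫ p : (ℝ × 𝒳) × (ℝ × 𝒳),
        δ p.1.2 p.2.2 * (c₁ * γpath τ p.1.2 + c₂ * γpath τ p.2.2) ∂(F₀.prod F₀))
      = ∫ q : 𝒳 × 𝒳, δ q.1 q.2 * (c₁ * γpath τ q.1 + c₂ * γpath τ q.2) ∂(μ₀.prod μ₀) := by
    intro τ hτ
    have hmap : μ₀.prod μ₀ = (F₀.prod F₀).map (Prod.map Prod.snd Prod.snd) := by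
      rw [hμ₀]; exact Measure.map_prod_map _ _ measurable_snd measurable_snd
    have hδqm : Measurable (fun q : 𝒳 × 𝒳 => δ q.1 q.2) := hδ_meas
    have hfm : Measurable (fun q : 𝒳 × 𝒳 =>
        δ q.1 q.2 * (c₁ * γpath τ q.1 + c₂ * γpath τ q.2)) :=
      hδqm.mul ((((hγm τ hτ).comp measurable_fst).const_mul c₁).add
        (((hγm τ hτ).comp measurable_snd).const_mul c₂))
    rw [hmap, integral_map (measurable_snd.prodMap measurable_snd).aemeasurable
      hfm.aestronglyMeasurable]
    rfl
  -- MemLp and integrability of the δ-integrands over μ₀ ⊗ μ₀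
  have hMℒσ : ∀ σ ∈ Set.Ico (0:ℝ) τbar,
      MemLp (fun q : 𝒳 × 𝒳 => c₁ * γpath σ q.1 + c₂ * γpath σ q.2) 2 (μ₀.prod μ₀) := by
    intro σ hσ
    exact ((aux_memℒp_comp_fst (hΓ_L2 _ (hγΓ σ hσ))).const_mul c₁).add
      ((aux_memℒp_comp_snd (hΓ_L2 _ (hγΓ σ hσ))).const_mul c₂)
  have hIδσ : ∀ σ ∈ Set.Ico (0:ℝ) τbar,
      Integrable (fun q : 𝒳 × 𝒳 =>
        δ q.1 q.2 * (c₁ * γpath σ q.1 + c₂ * γpath σ q.2)) (μ₀.prod μ₀) :=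
    fun σ hσ => aux_l2_mul_integrable hδ_L2 (hMℒσ σ hσ)
  -- derivative of the δ-functional is D''
  have hDer : HasDerivWithinAt
      (fun τ : ℝ => ∫ p : (ℝ × 𝒳) × (ℝ × 𝒳),
        δ p.1.2 p.2.2 * (c₁ * γpath τ p.1.2 + c₂ * γpath τ p.2.2) ∂(F₀.prod F₀))
      (∫ q : 𝒳 × 𝒳, α₀ q.1 q.2 * (c₁ * γdot q.1 + c₂ * γdot q.2) ∂(μ₀.prod μ₀))
      (Set.Ici 0) 0 := by
    rw [hasDerivWithinAt_iff_tendsto_slope, Set.Ici_sdiff_left]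
    have hslope : slope (fun τ : ℝ => ∫ p : (ℝ × 𝒳) × (ℝ × 𝒳),
          δ p.1.2 p.2.2 * (c₁ * γpath τ p.1.2 + c₂ * γpath τ p.2.2) ∂(F₀.prod F₀)) 0
        = fun τ : ℝ =>
          ((∫ p : (ℝ × 𝒳) × (ℝ × 𝒳),
              δ p.1.2 p.2.2 * (c₁ * γpath τ p.1.2 + c₂ * γpath τ p.2.2) ∂(F₀.prod F₀))
            - ∫ p : (ℝ × 𝒳) × (ℝ × 𝒳),
              δ p.1.2 p.2.2 * (c₁ * γpath 0 p.1.2 + c₂ * γpath 0 p.2.2) ∂(F₀.prod F₀)) / τ := by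
      funext τ
      rw [slope_def_field, sub_zero]
    rw [hslope]
    apply aux_ratio_tendsto (C' := Cα * (|c₁| + |c₂|)) (by positivity)
    intro ε hε
    obtain ⟨δ', hδ'pos, hd⟩ := hpath ε hε
    refine ⟨min δ' τbar, lt_min hδ'pos hτbar, fun τ hτ0 hτlt => ?_⟩
    have hτδ : τ < δ' := lt_of_lt_of_le hτlt (min_le_left _ _)
    have hτI : τ ∈ Set.Ico (0:ℝ) τbar := ⟨le_of_lt hτ0, lt_of_lt_of_le hτlt (min_le_right _ _)⟩
    have hdΓ : (fun x => γpath τ x - γpath 0 x) ∈ Γ := by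
      have h := hΓ_add _ (hγΓ τ hτI) _ (hΓ_smul (-1) _ (hγΓ 0 h0mem))
      simpa [neg_one_mul, ← sub_eq_add_neg] using h
    have hsS : (fun q : 𝒳 × 𝒳 =>
        c₁ * (γpath τ q.1 - γpath 0 q.1) + c₂ * (γpath τ q.2 - γpath 0 q.2)) ∈ S :=
      hS_sub _ (hΓ_smul c₁ _ hdΓ) _ (hΓ_smul c₂ _ hdΓ)
    have hsL2 : MemLp (fun q : 𝒳 × 𝒳 =>
        c₁ * (γpath τ q.1 - γpath 0 q.1) + c₂ * (γpath τ q.2 - γpath 0 q.2)) 2 (μ₀.prod μ₀) :=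
      hS_L2 _ hsS
    have hδs : Integrable (fun q : 𝒳 × 𝒳 => δ q.1 q.2 *
        (c₁ * (γpath τ q.1 - γpath 0 q.1) + c₂ * (γpath τ q.2 - γpath 0 q.2))) (μ₀.prod μ₀) :=
      aux_l2_mul_integrable hδ_L2 hsL2
    have hαs : Integrable (fun q : 𝒳 × 𝒳 => α₀ q.1 q.2 *
        (c₁ * (γpath τ q.1 - γpath 0 q.1) + c₂ * (γpath τ q.2 - γpath 0 q.2))) (μ₀.prod μ₀) :=
      (hsL2.integrable one_le_two).bdd_mul hαqm.aestronglyMeasurable (Filter.Eventually.of_forall hαbddq.choose_spec)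
    -- step 1: the increment equals ∫ δ·s
    have hstep1 : (∫ p : (ℝ × 𝒳) × (ℝ × 𝒳),
          δ p.1.2 p.2.2 * (c₁ * γpath τ p.1.2 + c₂ * γpath τ p.2.2) ∂(F₀.prod F₀))
        - (∫ p : (ℝ × 𝒳) × (ℝ × 𝒳),
          δ p.1.2 p.2.2 * (c₁ * γpath 0 p.1.2 + c₂ * γpath 0 p.2.2) ∂(F₀.prod F₀))
        = ∫ q : 𝒳 × 𝒳, δ q.1 q.2 *
          (c₁ * (γpath τ q.1 - γpath 0 q.1) + c₂ * (γpath τ q.2 - γpath 0 q.2)) ∂(μ₀.prod μ₀) := by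
      rw [hJconv τ hτI, hJconv 0 h0mem, ← integral_sub (hIδσ τ hτI) (hIδσ 0 h0mem)]
      exact integral_congr_ae (Filter.Eventually.of_forall fun q => by ring)
    -- step 2: projection
    have hproj : (∫ q : 𝒳 × 𝒳, (δ q.1 q.2 - α₀ q.1 q.2) *
        (c₁ * (γpath τ q.1 - γpath 0 q.1) + c₂ * (γpath τ q.2 - γpath 0 q.2)) ∂(μ₀.prod μ₀)) = 0 :=
      hα₀_proj _ hsS
    have hstep2 : (∫ q : 𝒳 × 𝒳, δ q.1 q.2 *
          (c₁ * (γpath τ q.1 - γpath 0 q.1) + c₂ * (γpath τ q.2 - γpath 0 q.2)) ∂(μ₀.prod μ₀))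
        = ∫ q : 𝒳 × 𝒳, α₀ q.1 q.2 *
          (c₁ * (γpath τ q.1 - γpath 0 q.1) + c₂ * (γpath τ q.2 - γpath 0 q.2)) ∂(μ₀.prod μ₀) := by
      have hsub : (∫ q : 𝒳 × 𝒳, (δ q.1 q.2 - α₀ q.1 q.2) *
          (c₁ * (γpath τ q.1 - γpath 0 q.1) + c₂ * (γpath τ q.2 - γpath 0 q.2)) ∂(μ₀.prod μ₀))
          = (∫ q : 𝒳 × 𝒳, δ q.1 q.2 *
              (c₁ * (γpath τ q.1 - γpath 0 q.1) + c₂ * (γpath τ q.2 - γpath 0 q.2)) ∂(μ₀.prod μ₀))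
            - ∫ q : 𝒳 × 𝒳, α₀ q.1 q.2 *
              (c₁ * (γpath τ q.1 - γpath 0 q.1) + c₂ * (γpath τ q.2 - γpath 0 q.2)) ∂(μ₀.prod μ₀) := by
        rw [← integral_sub hδs hαs]
        exact integral_congr_ae (Filter.Eventually.of_forall fun q => by ring)
      rw [hsub] at hproj
      linarith
    -- step 3: the estimate
    have hαγτ : Integrable (fun q : 𝒳 × 𝒳 =>
        τ * (α₀ q.1 q.2 * (c₁ * γdot q.1 + c₂ * γdot q.2))) (μ₀.prod μ₀) :=
      hγdcomb.const_mul τ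
    have heq3 : (∫ q : 𝒳 × 𝒳, α₀ q.1 q.2 *
          (c₁ * (γpath τ q.1 - γpath 0 q.1) + c₂ * (γpath τ q.2 - γpath 0 q.2)) ∂(μ₀.prod μ₀))
        - τ * (∫ q : 𝒳 × 𝒳, α₀ q.1 q.2 * (c₁ * γdot q.1 + c₂ * γdot q.2) ∂(μ₀.prod μ₀))
        = ∫ q : 𝒳 × 𝒳, α₀ q.1 q.2 *
            (c₁ * (γpath τ q.1 - γpath 0 q.1) + c₂ * (γpath τ q.2 - γpath 0 q.2))
          - τ * (α₀ q.1 q.2 * (c₁ * γdot q.1 + c₂ * γdot q.2)) ∂(μ₀.prod μ₀) := by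
      rw [← integral_const_mul, ← integral_sub hαs hαγτ]
    have hb3 : ∀ q : 𝒳 × 𝒳, ‖α₀ q.1 q.2 *
          (c₁ * (γpath τ q.1 - γpath 0 q.1) + c₂ * (γpath τ q.2 - γpath 0 q.2))
        - τ * (α₀ q.1 q.2 * (c₁ * γdot q.1 + c₂ * γdot q.2))‖
        ≤ Cα * (|c₁| + |c₂|) * (ε * τ) := by
      intro q
      have h1 := hd τ hτ0 hτδ q.1
      have h2 := hd τ hτ0 hτδ q.2
      have hre : α₀ q.1 q.2 *
            (c₁ * (γpath τ q.1 - γpath 0 q.1) + c₂ * (γpath τ q.2 - γpath 0 q.2))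
          - τ * (α₀ q.1 q.2 * (c₁ * γdot q.1 + c₂ * γdot q.2))
          = α₀ q.1 q.2 * (c₁ * (γpath τ q.1 - γpath 0 q.1 - τ * γdot q.1)
            + c₂ * (γpath τ q.2 - γpath 0 q.2 - τ * γdot q.2)) := by ring
      rw [Real.norm_eq_abs, hre, abs_mul]
      have h3 : |c₁ * (γpath τ q.1 - γpath 0 q.1 - τ * γdot q.1)
            + c₂ * (γpath τ q.2 - γpath 0 q.2 - τ * γdot q.2)|
          ≤ |c₁| * (ε * τ) + |c₂| * (ε * τ) := by
        calc |c₁ * (γpath τ q.1 - γpath 0 q.1 - τ * γdot q.1)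
              + c₂ * (γpath τ q.2 - γpath 0 q.2 - τ * γdot q.2)|
            ≤ |c₁ * (γpath τ q.1 - γpath 0 q.1 - τ * γdot q.1)|
              + |c₂ * (γpath τ q.2 - γpath 0 q.2 - τ * γdot q.2)| := abs_add_le _ _
          _ ≤ |c₁| * (ε * τ) + |c₂| * (ε * τ) := by
              rw [abs_mul, abs_mul]
              exact add_le_add (mul_le_mul_of_nonneg_left h1 (abs_nonneg _))
                (mul_le_mul_of_nonneg_left h2 (abs_nonneg _))
      calc |α₀ q.1 q.2| * |c₁ * (γpath τ q.1 - γpath 0 q.1 - τ * γdot q.1)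
            + c₂ * (γpath τ q.2 - γpath 0 q.2 - τ * γdot q.2)|
          ≤ Cα * (|c₁| * (ε * τ) + |c₂| * (ε * τ)) :=
            mul_le_mul (hα₀_bdd _ _) h3 (abs_nonneg _) hCα
        _ = Cα * (|c₁| + |c₂|) * (ε * τ) := by ring
    rw [hstep1, hstep2, ← Real.norm_eq_abs, heq3]
    calc ‖∫ q : 𝒳 × 𝒳, α₀ q.1 q.2 *
            (c₁ * (γpath τ q.1 - γpath 0 q.1) + c₂ * (γpath τ q.2 - γpath 0 q.2))
          - τ * (α₀ q.1 q.2 * (c₁ * γdot q.1 + c₂ * γdot q.2)) ∂(μ₀.prod μ₀)‖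
        ≤ Cα * (|c₁| + |c₂|) * (ε * τ) * ((μ₀.prod μ₀) Set.univ).toReal :=
          norm_integral_le_of_norm_le_const (Filter.Eventually.of_forall hb3)
      _ = Cα * (|c₁| + |c₂|) * ε * τ := by
          rw [measure_univ, ENNReal.toReal_one, mul_one]; ring
  -- identify D with D''
  have hD : D = ∫ q : 𝒳 × 𝒳, α₀ q.1 q.2 * (c₁ * γdot q.1 + c₂ * γdot q.2) ∂(μ₀.prod μ₀) :=
    UniqueDiffWithinAt.eq_deriv _ (uniqueDiffOn_Ici (0:ℝ) 0 Set.self_mem_Ici) hδD hDer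
   -- ===== identify ∫ φ dK_H with D'' =====
  have hres00 := hresF₀ 0 h0mem
  have hresH0 := hresH 0 h0mem
  have hφ1FH : Integrable (fun p : (ℝ × 𝒳) × (ℝ × 𝒳) =>
      α₀ p.1.2 p.2.2 * (c₁ * (p.1.1 - γpath 0 p.1.2))) (F₀.prod H) :=
    (aux_int_comp_fst' (hres00.const_mul c₁)).bdd_mul hα2m.aestronglyMeasurable (Filter.Eventually.of_forall hαbdd2.choose_spec)
  have hφ2FH : Integrable (fun p : (ℝ × 𝒳) × (ℝ × 𝒳) =>
      α₀ p.1.2 p.2.2 * (c₂ * (p.2.1 - γpath 0 p.2.2))) (F₀.prod H) :=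
    (aux_int_comp_snd' (hresH0.const_mul c₂)).bdd_mul hα2m.aestronglyMeasurable (Filter.Eventually.of_forall hαbdd2.choose_spec)
  have hφ1HF : Integrable (fun p : (ℝ × 𝒳) × (ℝ × 𝒳) =>
      α₀ p.1.2 p.2.2 * (c₁ * (p.1.1 - γpath 0 p.1.2))) (H.prod F₀) :=
    (aux_int_comp_fst' (hresH0.const_mul c₁)).bdd_mul hα2m.aestronglyMeasurable (Filter.Eventually.of_forall hαbdd2.choose_spec)
  have hφ2HF : Integrable (fun p : (ℝ × 𝒳) × (ℝ × 𝒳) =>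
      α₀ p.1.2 p.2.2 * (c₂ * (p.2.1 - γpath 0 p.2.2))) (H.prod F₀) :=
    (aux_int_comp_snd' (hres00.const_mul c₂)).bdd_mul hα2m.aestronglyMeasurable (Filter.Eventually.of_forall hαbdd2.choose_spec)
  have hφFH : Integrable (fun p : (ℝ × 𝒳) × (ℝ × 𝒳) => α₀ p.1.2 p.2.2 *
      (c₁ * p.1.1 + c₂ * p.2.1 - c₁ * γpath 0 p.1.2 - c₂ * γpath 0 p.2.2)) (F₀.prod H) := by
    have h2 : Integrable (fun p : (ℝ × 𝒳) × (ℝ × 𝒳) =>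
        c₁ * p.1.1 + c₂ * p.2.1 - c₁ * γpath 0 p.1.2 - c₂ * γpath 0 p.2.2) (F₀.prod H) :=
      (((aux_int_comp_fst' (hYF₀.const_mul c₁)).add
        (aux_int_comp_snd' (hYH.const_mul c₂))).sub
        (aux_int_comp_fst' ((hγcF₀ 0 h0mem).const_mul c₁))).sub
        (aux_int_comp_snd' ((hγcH 0 h0mem).const_mul c₂))
    exact h2.bdd_mul hα2m.aestronglyMeasurable (Filter.Eventually.of_forall hαbdd2.choose_spec)
  have hφHF : Integrable (fun p : (ℝ × 𝒳) × (ℝ × 𝒳) => α₀ p.1.2 p.2.2 *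
      (c₁ * p.1.1 + c₂ * p.2.1 - c₁ * γpath 0 p.1.2 - c₂ * γpath 0 p.2.2)) (H.prod F₀) := by
    have h2 : Integrable (fun p : (ℝ × 𝒳) × (ℝ × 𝒳) =>
        c₁ * p.1.1 + c₂ * p.2.1 - c₁ * γpath 0 p.1.2 - c₂ * γpath 0 p.2.2) (H.prod F₀) :=
      (((aux_int_comp_fst' (hYH.const_mul c₁)).add
        (aux_int_comp_snd' (hYF₀.const_mul c₂))).sub
        (aux_int_comp_fst' ((hγcH 0 h0mem).const_mul c₁))).sub
        (aux_int_comp_snd' ((hγcF₀ 0 h0mem).const_mul c₂))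
    exact h2.bdd_mul hα2m.aestronglyMeasurable (Filter.Eventually.of_forall hαbdd2.choose_spec)
  have hsplitK : (∫ p : (ℝ × 𝒳) × (ℝ × 𝒳), α₀ p.1.2 p.2.2 *
        (c₁ * p.1.1 + c₂ * p.2.1 - c₁ * γpath 0 p.1.2 - c₂ * γpath 0 p.2.2)
        ∂(F₀.prod H + H.prod F₀))
      = (∫ p : (ℝ × 𝒳) × (ℝ × 𝒳), α₀ p.1.2 p.2.2 *
          (c₁ * p.1.1 + c₂ * p.2.1 - c₁ * γpath 0 p.1.2 - c₂ * γpath 0 p.2.2) ∂(F₀.prod H))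
        + ∫ p : (ℝ × 𝒳) × (ℝ × 𝒳), α₀ p.1.2 p.2.2 *
          (c₁ * p.1.1 + c₂ * p.2.1 - c₁ * γpath 0 p.1.2 - c₂ * γpath 0 p.2.2) ∂(H.prod F₀) :=
    integral_add_measure hφFH hφHF
  have hFHsplit : (∫ p : (ℝ × 𝒳) × (ℝ × 𝒳), α₀ p.1.2 p.2.2 *
        (c₁ * p.1.1 + c₂ * p.2.1 - c₁ * γpath 0 p.1.2 - c₂ * γpath 0 p.2.2) ∂(F₀.prod H))
      = (∫ p : (ℝ × 𝒳) × (ℝ × 𝒳),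
          α₀ p.1.2 p.2.2 * (c₁ * (p.1.1 - γpath 0 p.1.2)) ∂(F₀.prod H))
        + ∫ p : (ℝ × 𝒳) × (ℝ × 𝒳),
          α₀ p.1.2 p.2.2 * (c₂ * (p.2.1 - γpath 0 p.2.2)) ∂(F₀.prod H) := by
    rw [← integral_add hφ1FH hφ2FH]
    exact integral_congr_ae (Filter.Eventually.of_forall fun p => by ring)
  have hHFsplit : (∫ p : (ℝ × 𝒳) × (ℝ × 𝒳), α₀ p.1.2 p.2.2 *
        (c₁ * p.1.1 + c₂ * p.2.1 - c₁ * γpath 0 p.1.2 - c₂ * γpath 0 p.2.2) ∂(H.prod F₀))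
      = (∫ p : (ℝ × 𝒳) × (ℝ × 𝒳),
          α₀ p.1.2 p.2.2 * (c₁ * (p.1.1 - γpath 0 p.1.2)) ∂(H.prod F₀))
        + ∫ p : (ℝ × 𝒳) × (ℝ × 𝒳),
          α₀ p.1.2 p.2.2 * (c₂ * (p.2.1 - γpath 0 p.2.2)) ∂(H.prod F₀) := by
    rw [← integral_add hφ1HF hφ2HF]
    exact integral_congr_ae (Filter.Eventually.of_forall fun p => by ring)
  have hzFH : (∫ p : (ℝ × 𝒳) × (ℝ × 𝒳),
      α₀ p.1.2 p.2.2 * (c₁ * (p.1.1 - γpath 0 p.1.2)) ∂(F₀.prod H)) = 0 := by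
    have hkey : ∀ b : ℝ × 𝒳,
        (∫ a : ℝ × 𝒳, α₀ a.2 b.2 * (c₁ * (a.1 - γpath 0 a.2)) ∂F₀) = 0 := by
      intro b
      have h := horth 0 h0mem _ (hΓ_smul c₁ _ (hα₀_sec₁ b.2))
      rw [hF0] at h
      calc (∫ a : ℝ × 𝒳, α₀ a.2 b.2 * (c₁ * (a.1 - γpath 0 a.2)) ∂F₀)
          = ∫ w : ℝ × 𝒳, c₁ * α₀ w.2 b.2 * (w.1 - γpath 0 w.2) ∂F₀ :=
            integral_congr_ae (Filter.Eventually.of_forall fun w => by ring)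
        _ = 0 := h
    calc (∫ p : (ℝ × 𝒳) × (ℝ × 𝒳),
          α₀ p.1.2 p.2.2 * (c₁ * (p.1.1 - γpath 0 p.1.2)) ∂(F₀.prod H))
        = ∫ b : ℝ × 𝒳, ∫ a : ℝ × 𝒳,
            α₀ a.2 b.2 * (c₁ * (a.1 - γpath 0 a.2)) ∂F₀ ∂H := integral_prod_symm _ hφ1FH
      _ = 0 := by simp [hkey]
  have hzHF : (∫ p : (ℝ × 𝒳) × (ℝ × 𝒳),
      α₀ p.1.2 p.2.2 * (c₂ * (p.2.1 - γpath 0 p.2.2)) ∂(H.prod F₀)) = 0 := by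
    have hkey : ∀ a : ℝ × 𝒳,
        (∫ b : ℝ × 𝒳, α₀ a.2 b.2 * (c₂ * (b.1 - γpath 0 b.2)) ∂F₀) = 0 := by
      intro a
      have h := horth 0 h0mem _ (hΓ_smul c₂ _ (hα₀_sec₂ a.2))
      rw [hF0] at h
      calc (∫ b : ℝ × 𝒳, α₀ a.2 b.2 * (c₂ * (b.1 - γpath 0 b.2)) ∂F₀)
          = ∫ w : ℝ × 𝒳, c₂ * α₀ a.2 w.2 * (w.1 - γpath 0 w.2) ∂F₀ :=
            integral_congr_ae (Filter.Eventually.of_forall fun w => by ring)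
        _ = 0 := h
    calc (∫ p : (ℝ × 𝒳) × (ℝ × 𝒳),
          α₀ p.1.2 p.2.2 * (c₂ * (p.2.1 - γpath 0 p.2.2)) ∂(H.prod F₀))
        = ∫ a : ℝ × 𝒳, ∫ b : ℝ × 𝒳,
            α₀ a.2 b.2 * (c₂ * (b.1 - γpath 0 b.2)) ∂F₀ ∂H := integral_prod _ hφ2HF
      _ = 0 := by simp [hkey]
  have hmapG : ∀ (G : 𝒳 → ℝ), AEStronglyMeasurable G (F₀.map Prod.snd) →
      (∫ w : ℝ × 𝒳, G w.2 ∂F₀) = ∫ v, G v ∂μ₀ := by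
    intro G hG
    rw [hμ₀, integral_map measurable_snd.aemeasurable hG]
  have hG2m : AEStronglyMeasurable (fun u : 𝒳 => ∫ x, c₂ * α₀ u x * γdot x ∂μ₀)
      (F₀.map Prod.snd) := by
    have hm : Measurable (fun q : 𝒳 × 𝒳 => c₂ * α₀ q.1 q.2 * γdot q.2) :=
      (hαqm.const_mul c₂).mul (hγdot_meas.comp measurable_snd)
    exact hm.stronglyMeasurable.integral_prod_right'.aestronglyMeasurable
  have hG1m : AEStronglyMeasurable (fun v : 𝒳 => ∫ x, c₁ * α₀ x v * γdot x ∂μ₀)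
      (F₀.map Prod.snd) := by
    have hm : Measurable (fun q : 𝒳 × 𝒳 => c₁ * α₀ q.2 q.1 * γdot q.2) :=
      ((hα₀_meas.comp (measurable_snd.prodMk measurable_fst)).const_mul c₁).mul
        (hγdot_meas.comp measurable_snd)
    exact hm.stronglyMeasurable.integral_prod_right'.aestronglyMeasurable
  have hstarFH : (∫ p : (ℝ × 𝒳) × (ℝ × 𝒳),
      α₀ p.1.2 p.2.2 * (c₂ * (p.2.1 - γpath 0 p.2.2)) ∂(F₀.prod H))
      = ∫ u : 𝒳, (∫ x, c₂ * α₀ u x * γdot x ∂μ₀) ∂μ₀ := by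
    have hinner : ∀ u : 𝒳, (∫ b : ℝ × 𝒳, α₀ u b.2 * (c₂ * (b.1 - γpath 0 b.2)) ∂H)
        = ∫ x, c₂ * α₀ u x * γdot x ∂μ₀ := by
      intro u
      have hb : ∀ x, |c₂ * α₀ u x| ≤ |c₂| * Cα := fun x => by
        rw [abs_mul]; exact mul_le_mul_of_nonneg_left (hα₀_bdd _ _) (abs_nonneg _)
      have h : (∫ x, c₂ * α₀ u x * γdot x ∂μ₀)
          = ∫ w : ℝ × 𝒳, c₂ * α₀ u w.2 * (w.1 - γpath 0 w.2) ∂H :=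
        hstar (|c₂| * Cα) _ (hΓ_smul c₂ _ (hα₀_sec₂ u)) hb
      calc (∫ b : ℝ × 𝒳, α₀ u b.2 * (c₂ * (b.1 - γpath 0 b.2)) ∂H)
          = ∫ w : ℝ × 𝒳, c₂ * α₀ u w.2 * (w.1 - γpath 0 w.2) ∂H :=
            integral_congr_ae (Filter.Eventually.of_forall fun w => by ring)
        _ = ∫ x, c₂ * α₀ u x * γdot x ∂μ₀ := h.symm
    calc (∫ p : (ℝ × 𝒳) × (ℝ × 𝒳),
          α₀ p.1.2 p.2.2 * (c₂ * (p.2.1 - γpath 0 p.2.2)) ∂(F₀.prod H))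
        = ∫ a : ℝ × 𝒳, (∫ b : ℝ × 𝒳,
            α₀ a.2 b.2 * (c₂ * (b.1 - γpath 0 b.2)) ∂H) ∂F₀ := integral_prod _ hφ2FH
      _ = ∫ a : ℝ × 𝒳, (∫ x, c₂ * α₀ a.2 x * γdot x ∂μ₀) ∂F₀ :=
          integral_congr_ae (Filter.Eventually.of_forall fun a => hinner a.2)
      _ = ∫ u : 𝒳, (∫ x, c₂ * α₀ u x * γdot x ∂μ₀) ∂μ₀ := hmapG _ hG2m
  have hstarHF : (∫ p : (ℝ × 𝒳) × (ℝ × 𝒳),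
      α₀ p.1.2 p.2.2 * (c₁ * (p.1.1 - γpath 0 p.1.2)) ∂(H.prod F₀))
      = ∫ v : 𝒳, (∫ x, c₁ * α₀ x v * γdot x ∂μ₀) ∂μ₀ := by
    have hinner : ∀ v : 𝒳, (∫ a : ℝ × 𝒳, α₀ a.2 v * (c₁ * (a.1 - γpath 0 a.2)) ∂H)
        = ∫ x, c₁ * α₀ x v * γdot x ∂μ₀ := by
      intro v
      have hb : ∀ x, |c₁ * α₀ x v| ≤ |c₁| * Cα := fun x => by
        rw [abs_mul]; exact mul_le_mul_of_nonneg_left (hα₀_bdd _ _) (abs_nonneg _)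
      have h : (∫ x, c₁ * α₀ x v * γdot x ∂μ₀)
          = ∫ w : ℝ × 𝒳, c₁ * α₀ w.2 v * (w.1 - γpath 0 w.2) ∂H :=
        hstar (|c₁| * Cα) _ (hΓ_smul c₁ _ (hα₀_sec₁ v)) hb
      calc (∫ a : ℝ × 𝒳, α₀ a.2 v * (c₁ * (a.1 - γpath 0 a.2)) ∂H)
          = ∫ w : ℝ × 𝒳, c₁ * α₀ w.2 v * (w.1 - γpath 0 w.2) ∂H :=
            integral_congr_ae (Filter.Eventually.of_forall fun w => by ring)
        _ = ∫ x, c₁ * α₀ x v * γdot x ∂μ₀ := h.symm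
    calc (∫ p : (ℝ × 𝒳) × (ℝ × 𝒳),
          α₀ p.1.2 p.2.2 * (c₁ * (p.1.1 - γpath 0 p.1.2)) ∂(H.prod F₀))
        = ∫ b : ℝ × 𝒳, (∫ a : ℝ × 𝒳,
            α₀ a.2 b.2 * (c₁ * (a.1 - γpath 0 a.2)) ∂H) ∂F₀ := integral_prod_symm _ hφ1HF
      _ = ∫ b : ℝ × 𝒳, (∫ x, c₁ * α₀ x b.2 * γdot x ∂μ₀) ∂F₀ :=
          integral_congr_ae (Filter.Eventually.of_forall fun b => hinner b.2)
      _ = ∫ v : 𝒳, (∫ x, c₁ * α₀ x v * γdot x ∂μ₀) ∂μ₀ := hmapG _ hG1m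
  -- decompose D''
  have hI1 : Integrable (fun q : 𝒳 × 𝒳 => α₀ q.1 q.2 * (c₁ * γdot q.1)) (μ₀.prod μ₀) := by
    refine aux_int_of_bdd (C := Cα * (|c₁| * M))
      ((hαqm.mul ((hγdot_meas.comp measurable_fst).const_mul c₁)).aestronglyMeasurable) ?_
    intro q
    rw [abs_mul, abs_mul]
    exact mul_le_mul (hα₀_bdd _ _)
      (mul_le_mul_of_nonneg_left (hγdot_bdd _) (abs_nonneg _)) (by positivity) hCα
  have hI2 : Integrable (fun q : 𝒳 × 𝒳 => α₀ q.1 q.2 * (c₂ * γdot q.2)) (μ₀.prod μ₀) := by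
    refine aux_int_of_bdd (C := Cα * (|c₂| * M))
      ((hαqm.mul ((hγdot_meas.comp measurable_snd).const_mul c₂)).aestronglyMeasurable) ?_
    intro q
    rw [abs_mul, abs_mul]
    exact mul_le_mul (hα₀_bdd _ _)
      (mul_le_mul_of_nonneg_left (hγdot_bdd _) (abs_nonneg _)) (by positivity) hCα
  have hDpp_split : (∫ q : 𝒳 × 𝒳,
        α₀ q.1 q.2 * (c₁ * γdot q.1 + c₂ * γdot q.2) ∂(μ₀.prod μ₀))
      = (∫ q : 𝒳 × 𝒳, α₀ q.1 q.2 * (c₁ * γdot q.1) ∂(μ₀.prod μ₀))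
        + ∫ q : 𝒳 × 𝒳, α₀ q.1 q.2 * (c₂ * γdot q.2) ∂(μ₀.prod μ₀) := by
    rw [← integral_add hI1 hI2]
    exact integral_congr_ae (Filter.Eventually.of_forall fun q => by ring)
  have hDpp1 : (∫ q : 𝒳 × 𝒳, α₀ q.1 q.2 * (c₁ * γdot q.1) ∂(μ₀.prod μ₀))
      = ∫ v : 𝒳, (∫ x, c₁ * α₀ x v * γdot x ∂μ₀) ∂μ₀ := by
    calc (∫ q : 𝒳 × 𝒳, α₀ q.1 q.2 * (c₁ * γdot q.1) ∂(μ₀.prod μ₀))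
        = ∫ v : 𝒳, ∫ u : 𝒳, α₀ u v * (c₁ * γdot u) ∂μ₀ ∂μ₀ := integral_prod_symm _ hI1
      _ = ∫ v : 𝒳, (∫ x, c₁ * α₀ x v * γdot x ∂μ₀) ∂μ₀ :=
          integral_congr_ae (Filter.Eventually.of_forall fun v =>
            integral_congr_ae (Filter.Eventually.of_forall fun u => by ring))
  have hDpp2 : (∫ q : 𝒳 × 𝒳, α₀ q.1 q.2 * (c₂ * γdot q.2) ∂(μ₀.prod μ₀))
      = ∫ u : 𝒳, (∫ x, c₂ * α₀ u x * γdot x ∂μ₀) ∂μ₀ := by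
    calc (∫ q : 𝒳 × 𝒳, α₀ q.1 q.2 * (c₂ * γdot q.2) ∂(μ₀.prod μ₀))
        = ∫ u : 𝒳, ∫ x' : 𝒳, α₀ u x' * (c₂ * γdot x') ∂μ₀ ∂μ₀ := integral_prod _ hI2
      _ = ∫ u : 𝒳, (∫ x, c₂ * α₀ u x * γdot x ∂μ₀) ∂μ₀ :=
          integral_congr_ae (Filter.Eventually.of_forall fun u =>
            integral_congr_ae (Filter.Eventually.of_forall fun x' => by ring))
  have hfin : (∫ p : (ℝ × 𝒳) × (ℝ × 𝒳), α₀ p.1.2 p.2.2 *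
        (c₁ * p.1.1 + c₂ * p.2.1 - c₁ * γpath 0 p.1.2 - c₂ * γpath 0 p.2.2)
        ∂(F₀.prod H + H.prod F₀))
      = ∫ q : 𝒳 × 𝒳, α₀ q.1 q.2 * (c₁ * γdot q.1 + c₂ * γdot q.2) ∂(μ₀.prod μ₀) := by
    rw [hsplitK, hFHsplit, hHFsplit, hzFH, hzHF, hstarFH, hstarHF,
      hDpp_split, hDpp1, hDpp2]
    ring
  refine ⟨?_, partb⟩
  rw [show (∫ p : (ℝ × 𝒳) × (ℝ × 𝒳), α₀ p.1.2 p.2.2 *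
      (c₁ * p.1.1 + c₂ * p.2.1 - c₁ * γpath 0 p.1.2 - c₂ * γpath 0 p.2.2)
      ∂(F₀.prod H + H.prod F₀)) = D from hfin.trans hD.symm]
  exact hgD
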